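/- Let g_k(x, y) = y_k (y_k/x_k)^γ / Σ_{j=1}^K y_j (y_j/x_j)^γ for x, y in the open simplex (all coordinates positive, summing to 1) and γ ≥ 0. Then g(x,y) lies in the simplex, g(ρ, ρ) = ρ for any simplex point ρ, the Jacobian of g in x at (ρ,ρ) equals −γ(I − 1ᵀρ), and the Jacobian in y at (ρ,ρ) equals (γ+1)(I − 1ᵀρ). -/

import Mathlib

open Finset Real

private lemma derivA (γ : ℝ) (a : ℝ) (ha : 0 < a) :
    HasDerivAt (fun t : ℝ => a * (a / t) ^ γ) (-γ) a := by
  have h1 : HasDerivAt (fun t : ℝ => a / t) (a * -(a ^ 2)⁻¹) a :=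
    (hasDerivAt_inv ha.ne').const_mul a
  have h3 := (h1.rpow_const (p := γ) (Or.inl (by simp [div_self ha.ne']))).const_mul a
  refine h3.congr_deriv ?_
  rw [div_self ha.ne', Real.one_rpow]
  field_simp

private lemma derivB (γ : ℝ) (a : ℝ) (ha : 0 < a) :
    HasDerivAt (fun t : ℝ => t * (t / a) ^ γ) (γ + 1) a := by
  have h1 : HasDerivAt (fun t : ℝ => t / a) (1 / a) a := by
    simpa using (hasDerivAt_id a).div_const a
  have h3 := (hasDerivAt_id a).mul
    (h1.rpow_const (p := γ) (Or.inl (by simp [div_self ha.ne'])))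
  refine h3.congr_deriv ?_
  rw [div_self ha.ne', Real.one_rpow, Real.one_rpow, id]
  field_simp; ring

theorem stmt19 (K : ℕ) (γ : ℝ) (hγ : 0 ≤ γ)
    (g : (Fin K → ℝ) → (Fin K → ℝ) → Fin K → ℝ)
    (hg : ∀ x y k, g x y k =
      y k * (y k / x k) ^ γ / ∑ j, y j * (y j / x j) ^ γ) :
    (∀ x y : Fin K → ℝ, (∀ k, 0 < x k) → (∑ k, x k) = 1 →
        (∀ k, 0 < y k) → (∑ k, y k) = 1 →
        (∀ k, 0 < g x y k) ∧ ∑ k, g x y k = 1) ∧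
      (∀ ρ : Fin K → ℝ, (∀ k, 0 < ρ k) → (∑ k, ρ k) = 1 →
        (∀ k, g ρ ρ k = ρ k) ∧
        (∀ j k, deriv (fun t => g (Function.update ρ j t) ρ k) (ρ j) =
          -γ * ((if j = k then (1 : ℝ) else 0) - ρ k)) ∧
        (∀ j k, deriv (fun t => g ρ (Function.update ρ j t) k) (ρ j) =
          (γ + 1) * ((if j = k then (1 : ℝ) else 0) - ρ k))) := by
  constructor
  · intro x y hx hsx hy hsy
    have hne : (univ : Finset (Fin K)).Nonempty := by
      rcases univ.eq_empty_or_nonempty (α := Fin K) with h | h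
      · rw [h] at hsx; simp at hsx
      · exact h
    have hterm : ∀ k, 0 < y k * (y k / x k) ^ γ := fun k =>
      mul_pos (hy k) (Real.rpow_pos_of_pos (div_pos (hy k) (hx k)) γ)
    have hS : 0 < ∑ j, y j * (y j / x j) ^ γ :=
      Finset.sum_pos (fun j _ => hterm j) hne
    refine ⟨fun k => ?_, ?_⟩
    · rw [hg]; exact div_pos (hterm k) hS
    · simp_rw [hg]
      rw [← Finset.sum_div, div_self hS.ne']
  · intro ρ hρ hsρ
    have hval : ∀ k, ρ k * (ρ k / ρ k) ^ γ = ρ k := fun k => by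
      rw [div_self (hρ k).ne', Real.one_rpow, mul_one]
    have hSval : (∑ i, ρ i * (ρ i / ρ i) ^ γ) = 1 := by
      simp_rw [hval]; exact hsρ
    have hfix : ∀ k, g ρ ρ k = ρ k := fun k => by
      rw [hg, hval, hSval, div_one]
    refine ⟨hfix, fun j k => ?_, fun j k => ?_⟩
    · -- derivative in x
      have key : ∀ i : Fin K, HasDerivAt
          (fun t => ρ i * (ρ i / Function.update ρ j t i) ^ γ)
          (if i = j then -γ else 0) (ρ j) := by
        intro i
        by_cases h : i = j
        · subst h
          simp only [Function.update_self, if_pos rfl]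
          exact derivA γ (ρ i) (hρ i)
        · simp only [Function.update_apply, if_neg h]
          exact hasDerivAt_const _ _
      have hN := key k
      have hS' : HasDerivAt (fun t => ∑ i, ρ i * (ρ i / Function.update ρ j t i) ^ γ)
          (-γ) (ρ j) := by
        have := HasDerivAt.fun_sum (fun i (_ : i ∈ univ) => key i)
        simpa using this
      have hSv : (∑ i, ρ i * (ρ i / Function.update ρ j (ρ j) i) ^ γ) = 1 := by
        rw [Function.update_eq_self]; exact hSval
      have hdiv := hN.fun_div hS' (by rw [hSv]; norm_num)
      have hfun : (fun t => g (Function.update ρ j t) ρ k)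
          = fun t => ρ k * (ρ k / Function.update ρ j t k) ^ γ /
              ∑ i, ρ i * (ρ i / Function.update ρ j t i) ^ γ :=
        funext fun t => hg _ _ _
      rw [hfun, hdiv.deriv]
      rw [hSv, Function.update_eq_self, hval]
      rcases eq_or_ne j k with h | h
      · subst h; simp only [if_pos rfl]; ring_nf; simp; ring
      · rw [if_neg (Ne.symm h), if_neg h]; ring
    · -- derivative in y
      have key : ∀ i : Fin K, HasDerivAt
          (fun t => Function.update ρ j t i * (Function.update ρ j t i / ρ i) ^ γ)
          (if i = j then γ + 1 else 0) (ρ j) := by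
        intro i
        by_cases h : i = j
        · subst h
          simp only [Function.update_self, if_pos rfl]
          exact derivB γ (ρ i) (hρ i)
        · simp only [Function.update_apply, if_neg h]
          exact hasDerivAt_const _ _
      have hN := key k
      have hS' : HasDerivAt
          (fun t => ∑ i, Function.update ρ j t i * (Function.update ρ j t i / ρ i) ^ γ)
          (γ + 1) (ρ j) := by
        have := HasDerivAt.fun_sum (fun i (_ : i ∈ univ) => key i)
        simpa using this
      have hSv : (∑ i, Function.update ρ j (ρ j) i *
          (Function.update ρ j (ρ j) i / ρ i) ^ γ) = 1 := by
        rw [Function.update_eq_self]; exact hSval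
      have hdiv := hN.fun_div hS' (by rw [hSv]; norm_num)
      have hfun : (fun t => g ρ (Function.update ρ j t) k)
          = fun t => Function.update ρ j t k * (Function.update ρ j t k / ρ k) ^ γ /
              ∑ i, Function.update ρ j t i * (Function.update ρ j t i / ρ i) ^ γ :=
        funext fun t => hg _ _ _
      rw [hfun, hdiv.deriv]
      rw [hSv, Function.update_eq_self, hval]
      rcases eq_or_ne j k with h | h
      · subst h; simp only [if_pos rfl]; ring_nf; simp; ring
      · rw [if_neg (Ne.symm h), if_neg h]; ring
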